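/- (Logit attention satisfies attention overload.) Let X be a finite set of alternatives and define for every nonempty S ⊆ X and nonempty T ⊆ S the logit attention rule with parameter ς = 2: μ(T|S) = |T|² / Σ_{∅≠T'⊆S} |T'|², and μ(T|S) = 0 when T is not a nonempty subset of S. Then μ is an attention rule and satisfies attention overload; that is, φ_μ(a|S) ≤ φ_μ(a|T) whenever a ∈ T ⊆ S. -/

import Mathlib

open scoped Classical
open Finset

/-- A choice rule: probabilities are nonnegative on the choice problem, zero off it,
and sum to one over each nonempty choice problem. -/
def IsChoiceRule {α : Type*} [Fintype α] [DecidableEq α]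
    (π : α → Finset α → ℝ) : Prop :=
  ∀ S : Finset α, S.Nonempty →
    (∀ a ∈ S, 0 ≤ π a S) ∧ (∀ a : α, a ∉ S → π a S = 0) ∧ (∑ a ∈ S, π a S = 1)

/-- An attention rule: weights are nonnegative on nonempty subsets of the choice problem,
zero elsewhere, and sum to one over the nonempty subsets. -/
def IsAttentionRule {α : Type*} [Fintype α] [DecidableEq α]
    (μ : Finset α → Finset α → ℝ) : Prop :=
  ∀ S : Finset α, S.Nonempty →
    (∀ T : Finset α, T.Nonempty → T ⊆ S → 0 ≤ μ T S) ∧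
    (∀ T : Finset α, ¬(T.Nonempty ∧ T ⊆ S) → μ T S = 0) ∧
    (∑ T ∈ S.powerset.filter (fun T => T.Nonempty), μ T S = 1)

/-- Attention frequency of alternative `a` in choice problem `S` under attention rule `μ`. -/
noncomputable def attFreq {α : Type*} [Fintype α] [DecidableEq α]
    (μ : Finset α → Finset α → ℝ) (a : α) (S : Finset α) : ℝ :=
  ∑ T ∈ S.powerset.filter (fun T => a ∈ T), μ T S

/-- Attention overload: attention frequency weakly decreases as the choice problem expands. -/
def AttentionOverload {α : Type*} [Fintype α] [DecidableEq α]
    (μ : Finset α → Finset α → ℝ) : Prop :=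
  ∀ (a : α) (T S : Finset α), a ∈ T → T ⊆ S → attFreq μ a S ≤ attFreq μ a T

/-- `a` is the `r`-maximum of `T`. -/
def IsMaxOf {α : Type*} (r : α → α → Prop) (a : α) (T : Finset α) : Prop :=
  a ∈ T ∧ ∀ b ∈ T, b ≠ a → r a b

/-- The choice rule `π` is represented by the preference `r` and the attention rule `μ`. -/
noncomputable def Represents {α : Type*} [Fintype α] [DecidableEq α]
    (r : α → α → Prop) (μ : Finset α → Finset α → ℝ) (π : α → Finset α → ℝ) : Prop :=
  IsAttentionRule μ ∧
  ∀ S : Finset α, S.Nonempty → ∀ a ∈ S,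
    π a S = ∑ T ∈ S.powerset, (if IsMaxOf r a T then μ T S else 0)

/-- `π` is an Attention Overload Model. -/
noncomputable def IsAOM {α : Type*} [Fintype α] [DecidableEq α]
    (π : α → Finset α → ℝ) : Prop :=
  ∃ (r : α → α → Prop) (μ : Finset α → Finset α → ℝ),
    IsStrictTotalOrder α r ∧ AttentionOverload μ ∧ Represents r μ π

/-- `π(U_⪰(a) | T)`: probability of choosing from the weak upper contour set of `a` in `T`. -/
noncomputable def piUpper {α : Type*} [Fintype α] [DecidableEq α]
    (π : α → Finset α → ℝ) (r : α → α → Prop) (a : α) (T : Finset α) : ℝ :=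
  ∑ b ∈ T.filter (fun b => r b a ∨ b = a), π b T

/-- Attention Compensation (AC). -/
noncomputable def SatisfiesAC {α : Type*} [Fintype α] [DecidableEq α]
    (π : α → Finset α → ℝ) (r : α → α → Prop) : Prop :=
  ∀ (a : α) (T S : Finset α), a ∈ T → T ⊆ S → π a S ≤ piUpper π r a T


private lemma sum_card_powerset {α : Type*} [DecidableEq α] (S : Finset α) :
    2 * ∑ T ∈ S.powerset, T.card = S.card * 2 ^ S.card := by
  induction S using Finset.induction_on with
  | empty => simp
  | insert _ _ ha ih =>
    rename_i a S
    rw [Finset.sum_powerset_insert ha]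
    have h : ∑ T ∈ S.powerset, (insert a T).card = ∑ T ∈ S.powerset, (T.card + 1) := by
      refine Finset.sum_congr rfl fun T hT => ?_
      rw [Finset.mem_powerset] at hT
      rw [Finset.card_insert_of_notMem (fun h => ha (hT h))]
    rw [h, Finset.sum_add_distrib, Finset.sum_const, Finset.card_powerset,
      Finset.card_insert_of_notMem ha]
    ring_nf
    omega

private lemma sum_card_sq_powerset {α : Type*} [DecidableEq α] (S : Finset α) :
    4 * ∑ T ∈ S.powerset, T.card ^ 2 = S.card * (S.card + 1) * 2 ^ S.card := by
  induction S using Finset.induction_on with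
  | empty => simp
  | insert _ _ ha ih =>
    rename_i a S
    rw [Finset.sum_powerset_insert ha]
    have h : ∑ T ∈ S.powerset, (insert a T).card ^ 2
        = ∑ T ∈ S.powerset, (T.card ^ 2 + (2 * T.card + 1)) := by
      refine Finset.sum_congr rfl fun T hT => ?_
      rw [Finset.mem_powerset] at hT
      rw [Finset.card_insert_of_notMem (fun h => ha (hT h))]
      ring
    rw [h, Finset.sum_add_distrib, Finset.sum_add_distrib, Finset.sum_const,
      ← Finset.mul_sum, Finset.card_powerset, Finset.card_insert_of_notMem ha]
    have h2 := sum_card_powerset S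
    simp only [smul_eq_mul, mul_one]
    rw [pow_succ]
    zify at ih h2 ⊢
    linear_combination 2*ih + 4*h2

private lemma sum_card_sq_mem {α : Type*} [DecidableEq α] {a : α} {S : Finset α} (ha : a ∈ S) :
    4 * ∑ T ∈ S.powerset.filter (fun T => a ∈ T), T.card ^ 2
      = 2 ^ (S.card - 1) * S.card * (S.card + 3) := by
  have hrw : S = insert a (S.erase a) := by rw [Finset.insert_erase ha]
  have hna : a ∉ S.erase a := Finset.notMem_erase a S
  have hfil : ∑ T ∈ S.powerset.filter (fun T => a ∈ T), T.card ^ 2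
      = ∑ T ∈ S.powerset, (if a ∈ T then T.card ^ 2 else 0) := by
    rw [Finset.sum_filter]
  rw [hfil]
  nth_rewrite 1 [hrw]
  rw [Finset.sum_powerset_insert hna]
  have h1 : ∑ T ∈ (S.erase a).powerset, (if a ∈ T then T.card ^ 2 else 0) = 0 := by
    refine Finset.sum_eq_zero fun T hT => ?_
    rw [Finset.mem_powerset] at hT
    rw [if_neg (fun h => hna (hT h))]
  have h2 : ∑ T ∈ (S.erase a).powerset, (if a ∈ insert a T then (insert a T).card ^ 2 else 0)
      = ∑ T ∈ (S.erase a).powerset, (T.card ^ 2 + (2 * T.card + 1)) := by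
    refine Finset.sum_congr rfl fun T hT => ?_
    rw [Finset.mem_powerset] at hT
    rw [if_pos (Finset.mem_insert_self a T),
      Finset.card_insert_of_notMem (fun h => hna (hT h))]
    ring
  rw [h1, h2, zero_add, Finset.sum_add_distrib, Finset.sum_add_distrib, Finset.sum_const,
    ← Finset.mul_sum, Finset.card_powerset]
  have h3 := sum_card_powerset (S.erase a)
  have h4 := sum_card_sq_powerset (S.erase a)
  have h5 : (S.erase a).card = S.card - 1 := Finset.card_erase_of_mem ha
  have h6 : 1 ≤ S.card := Finset.card_pos.mpr ⟨a, ha⟩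
  rw [h5] at h3 h4
  set m := S.card - 1 with hm
  have hS : S.card = m + 1 := by omega
  rw [h5, hS]
  simp only [smul_eq_mul, mul_one]
  zify at h3 h4 ⊢
  linear_combination h4 + 4*h3
section Main
variable {α : Type*} [Fintype α] [DecidableEq α]

private lemma filter_sum_eq (S : Finset α) :
    ∑ T ∈ S.powerset.filter (fun T => T.Nonempty), ((T.card : ℝ)) ^ 2
      = ∑ T ∈ S.powerset, ((T.card : ℝ)) ^ 2 := by
  refine Finset.sum_subset (Finset.filter_subset _ _) fun T hT hT' => ?_
  have : ¬ T.Nonempty := by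
    intro h
    exact hT' (Finset.mem_filter.mpr ⟨hT, h⟩)
  rw [Finset.not_nonempty_iff_eq_empty.mp this]
  simp

private lemma denom_eq (S : Finset α) :
    4 * ∑ T ∈ S.powerset.filter (fun T => T.Nonempty), ((T.card : ℝ)) ^ 2
      = S.card * (S.card + 1) * 2 ^ S.card := by
  rw [filter_sum_eq]
  have := sum_card_sq_powerset S
  have h : (4 : ℝ) * ∑ T ∈ S.powerset, ((T.card : ℝ)) ^ 2
      = ((4 * ∑ T ∈ S.powerset, T.card ^ 2 : ℕ) : ℝ) := by push_cast; ring
  rw [h, this]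
  push_cast; ring

private lemma denom_pos {S : Finset α} (hS : S.Nonempty) :
    0 < ∑ T ∈ S.powerset.filter (fun T => T.Nonempty), ((T.card : ℝ)) ^ 2 := by
  have h4 := denom_eq S
  have hn : 1 ≤ S.card := Finset.card_pos.mpr hS
  have hn' : (1 : ℝ) ≤ (S.card : ℝ) := by exact_mod_cast hn
  have hp : (0 : ℝ) < 2 ^ S.card := by positivity
  have hpr : (0 : ℝ) < (S.card : ℝ) * ((S.card : ℝ) + 1) * 2 ^ S.card :=
    mul_pos (mul_pos (by linarith) (by linarith)) hp
  linarith

private lemma numer_eq {a : α} {S : Finset α} (ha : a ∈ S) :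
    4 * ∑ T ∈ S.powerset.filter (fun T => a ∈ T), ((T.card : ℝ)) ^ 2
      = 2 ^ (S.card - 1) * S.card * (S.card + 3) := by
  have := sum_card_sq_mem ha
  have h : (4 : ℝ) * ∑ T ∈ S.powerset.filter (fun T => a ∈ T), ((T.card : ℝ)) ^ 2
      = ((4 * ∑ T ∈ S.powerset.filter (fun T => a ∈ T), T.card ^ 2 : ℕ) : ℝ) := by
    push_cast; ring
  rw [h, this]
  push_cast; ring

private lemma attFreq_logit {a : α} {S : Finset α} (ha : a ∈ S) :
    attFreq (fun T S : Finset α =>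
      if T.Nonempty ∧ T ⊆ S then
        (T.card : ℝ) ^ 2 / ∑ T' ∈ S.powerset.filter (fun T' => T'.Nonempty), (T'.card : ℝ) ^ 2
      else 0) a S = ((S.card : ℝ) + 3) / (2 * ((S.card : ℝ) + 1)) := by
  set D := ∑ T' ∈ S.powerset.filter (fun T' => T'.Nonempty), ((T'.card : ℝ)) ^ 2 with hD
  have hDpos : 0 < D := denom_pos ⟨a, ha⟩
  have hstep : attFreq (fun T S : Finset α =>
      if T.Nonempty ∧ T ⊆ S then
        (T.card : ℝ) ^ 2 / ∑ T' ∈ S.powerset.filter (fun T' => T'.Nonempty), (T'.card : ℝ) ^ 2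
      else 0) a S = (∑ T ∈ S.powerset.filter (fun T => a ∈ T), ((T.card : ℝ)) ^ 2) / D := by
    rw [attFreq, Finset.sum_div]
    refine Finset.sum_congr rfl fun T hT => ?_
    rw [Finset.mem_filter, Finset.mem_powerset] at hT
    rw [if_pos ⟨⟨a, hT.2⟩, hT.1⟩]
  rw [hstep]
  have hN := numer_eq ha
  have hDeq := denom_eq S
  have hn : 1 ≤ S.card := Finset.card_pos.mpr ⟨a, ha⟩
  have hpow : (2 : ℝ) ^ S.card = 2 ^ (S.card - 1) * 2 := by
    conv_lhs => rw [show S.card = (S.card - 1) + 1 by omega]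
    rw [pow_succ]
  rw [hpow] at hDeq
  have hn1 : (0 : ℝ) < 2 * ((S.card : ℝ) + 1) := by positivity
  rw [div_eq_div_iff hDpos.ne' hn1.ne']
  linear_combination (((S.card : ℝ) + 1) / 2) * hN - (((S.card : ℝ) + 3) / 4) * hDeq

end Main

/-- the logit attention rule with ς = 2 is an attention rule satisfying
attention overload. -/
theorem logit_attention_overload {α : Type*} [Fintype α] [DecidableEq α] :
    IsAttentionRule (fun T S : Finset α =>
      if T.Nonempty ∧ T ⊆ S then
        (T.card : ℝ) ^ 2 / ∑ T' ∈ S.powerset.filter (fun T' => T'.Nonempty), (T'.card : ℝ) ^ 2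
      else 0) ∧
    AttentionOverload (fun T S : Finset α =>
      if T.Nonempty ∧ T ⊆ S then
        (T.card : ℝ) ^ 2 / ∑ T' ∈ S.powerset.filter (fun T' => T'.Nonempty), (T'.card : ℝ) ^ 2
      else 0) := by
  constructor
  · intro S hS
    have hD := denom_pos hS
    refine ⟨?_, ?_, ?_⟩
    · intro T hT hTS
      simp only [if_pos (And.intro hT hTS)]
      exact div_nonneg (by positivity) hD.le
    · intro T h
      simp only [if_neg h]
    · have h : ∑ T ∈ S.powerset.filter (fun T => T.Nonempty),
          (if T.Nonempty ∧ T ⊆ S then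
            (T.card : ℝ) ^ 2 / ∑ T' ∈ S.powerset.filter (fun T' => T'.Nonempty), (T'.card : ℝ) ^ 2
          else 0)
          = ∑ T ∈ S.powerset.filter (fun T => T.Nonempty),
            ((T.card : ℝ) ^ 2 / ∑ T' ∈ S.powerset.filter (fun T' => T'.Nonempty), (T'.card : ℝ) ^ 2) := by
        refine Finset.sum_congr rfl fun T hT => ?_
        rw [Finset.mem_filter, Finset.mem_powerset] at hT
        rw [if_pos ⟨hT.2, hT.1⟩]
      rw [h, ← Finset.sum_div, div_self hD.ne']
  · intro a T S haT hTS
    rw [attFreq_logit (hTS haT), attFreq_logit haT]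
    have ht : 1 ≤ T.card := Finset.card_pos.mpr ⟨a, haT⟩
    have hts : T.card ≤ S.card := Finset.card_le_card hTS
    have ht' : (1 : ℝ) ≤ (T.card : ℝ) := by exact_mod_cast ht
    have hts' : (T.card : ℝ) ≤ (S.card : ℝ) := by exact_mod_cast hts
    rw [div_le_div_iff₀ (by linarith) (by linarith)]
    nlinarith
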